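/- For all natural numbers n, the sum over k from 0 to n of C(n,k)^3 * (1 + 3*(n - 2k) * H_k) equals (-1)^n. -/

import Mathlib

open Finset

def harmonicQ (m : Nat) : ℚ := ∑ j ∈ Finset.range m, (1 : ℚ) / (j + 1)

noncomputable section AuxWZ

/-- The summand. -/
def Fq (n k : ℕ) : ℚ := (n.choose k : ℚ) ^ 3 * (1 + 3 * ((n : ℚ) - 2 * k) * harmonicQ k)

/-- H-part of the WZ certificate numerator. -/
def Uc (x y : ℚ) : ℚ :=
  (3+3*x)*y^7 - (24+39*x+15*x^2)*y^6 + (72+162*x+117*x^2+27*x^3)*y^5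
    - (102+297*x+315*x^2+144*x^3+24*x^4)*y^4
    + (72+264*x+378*x^2+264*x^3+90*x^4+12*x^5)*y^3

/-- constant part of the WZ certificate numerator. -/
def Vc (x y : ℚ) : ℚ :=
  -(2+2*x)*y^6 + (18+30*x+12*x^2)*y^5 - (63+147*x+111*x^2+27*x^3)*y^4
    + (104+312*x+342*x^2+162*x^3+28*x^4)*y^3
    - (72+264*x+378*x^2+264*x^3+90*x^4+12*x^5)*y^2

/-- The WZ certificate. -/
def Gq (n k : ℕ) : ℚ :=
  ((n+2).choose k : ℚ) ^ 3 * (Vc n k + Uc n k * harmonicQ k) / (((n:ℚ)+1)^3 * ((n:ℚ)+2)^3)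

lemma harmonicQ_succ (k : ℕ) : harmonicQ (k+1) = harmonicQ k + 1 / ((k:ℚ)+1) := by
  simp [harmonicQ, Finset.sum_range_succ]

lemma chooseQ_right (m k : ℕ) (h : k ≤ m) :
    ((m.choose (k+1) : ℚ)) * ((k:ℚ)+1) = (m.choose k : ℚ) * ((m:ℚ) - (k:ℚ)) := by
  have hc := congrArg (Nat.cast : ℕ → ℚ) (Nat.choose_succ_right_eq m k)
  push_cast [Nat.cast_sub h] at hc
  linarith [hc]

lemma chooseQ_up (m k : ℕ) (h : k ≤ m + 1) :
    ((m:ℚ)+1) * (m.choose k : ℚ) = ((m+1).choose k : ℚ) * (((m:ℚ)+1) - (k:ℚ)) := by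
  have hn : (m+1) * m.choose k = (m+1).choose k * (m+1-k) := by
    rw [← Nat.choose_succ_right_eq]
    exact Nat.add_one_mul_choose_eq m k
  have hc := congrArg (Nat.cast : ℕ → ℚ) hn
  push_cast [Nat.cast_sub h] at hc
  linarith [hc]

set_option maxHeartbeats 1000000 in
lemma polyId (x y h : ℚ) :
    (y+1)^4*((x+1)*(1+3*(x-2*y)*h)*(x+1-y)^3*(x+2-y)^3
      + (2*x+3)*(x+1)^3*(1+3*(x+1-2*y)*h)*(x+2-y)^3
      + (x+2)^4*(x+1)^3*(1+3*(x+2-2*y)*h))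
    = (x+2-y)^3*((y+1)*(Vc x (y+1) + Uc x (y+1)*h) + Uc x (y+1))
      - (y+1)^4*(Vc x y + Uc x y*h) := by
  simp only [Uc, Vc]
  ring

set_option maxHeartbeats 1000000 in
/-- The key pointwise WZ identity. -/
lemma key (n k : ℕ) (hk : k ≤ n + 2) :
    ((n:ℚ)+1) * Fq n k + (2*(n:ℚ)+3) * Fq (n+1) k + ((n:ℚ)+2) * Fq (n+2) k
      = Gq n (k+1) - Gq n k := by
  have hn1 : ((n:ℚ)+1) ≠ 0 := by positivity
  have hn2 : ((n:ℚ)+2) ≠ 0 := by positivity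
  have hk1 : ((k:ℚ)+1) ≠ 0 := by positivity
  rcases lt_or_ge n k with hlt | hle
  · -- boundary cases k = n+1 or k = n+2
    rcases (by omega : k = n + 1 ∨ k = n + 2) with rfl | rfl
    · have c0 : (n.choose (n+1) : ℚ) = 0 := by
        simp [Nat.choose_eq_zero_of_lt (show n < n+1 by omega)]
      have a1 : (((n+1).choose (n+1) : ℕ) : ℚ) = 1 := by simp
      have b1 : (((n+2).choose (n+1) : ℕ) : ℚ) = (n:ℚ)+2 := by
        have : (n+2).choose (n+1) = n+2 := by
          have := Nat.choose_succ_self_right (n+1)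
          simpa using this
        rw [this]; push_cast; ring
      have b2 : (((n+2).choose (n+2) : ℕ) : ℚ) = 1 := by simp
      simp only [Fq, Gq, harmonicQ_succ (n+1), c0, a1, b1, b2, Uc, Vc]
      push_cast
      field_simp
      ring
    · have c0 : (n.choose (n+2) : ℚ) = 0 := by
        simp [Nat.choose_eq_zero_of_lt (show n < n+2 by omega)]
      have a0 : (((n+1).choose (n+2) : ℕ) : ℚ) = 0 := by
        simp [Nat.choose_eq_zero_of_lt (show n+1 < n+2 by omega)]
      have b2 : (((n+2).choose (n+2) : ℕ) : ℚ) = 1 := by simp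
      have b3 : (((n+2).choose (n+3) : ℕ) : ℚ) = 0 := by
        simp [Nat.choose_eq_zero_of_lt (show n+2 < n+3 by omega)]
      simp only [Fq, Gq, harmonicQ_succ (n+2), c0, a0, b2, b3, Uc, Vc]
      push_cast
      field_simp
      ring
  · -- main case k ≤ n
    have hkq : (k:ℚ) ≤ n := by exact_mod_cast hle
    have hne1 : ((n:ℚ)+1-(k:ℚ)) ≠ 0 := by
      have : (0:ℚ) < (n:ℚ)+1-(k:ℚ) := by linarith
      exact ne_of_gt this
    have hne2 : ((n:ℚ)+2-(k:ℚ)) ≠ 0 := by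
      have : (0:ℚ) < (n:ℚ)+2-(k:ℚ) := by linarith
      exact ne_of_gt this
    have e1 := chooseQ_up n k (by omega)
    have e2 := chooseQ_up (n+1) k (by omega)
    have e3 := chooseQ_right (n+2) k (by omega)
    push_cast at e1 e2 e3
    have ha : (((n+1).choose k : ℕ) : ℚ) = ((n:ℚ)+1) * (n.choose k : ℚ) / ((n:ℚ)+1-(k:ℚ)) := by
      rw [eq_div_iff hne1]; linear_combination -e1
    have hb : (((n+2).choose k : ℕ) : ℚ)
        = ((n:ℚ)+2) * (((n+1).choose k : ℕ) : ℚ) / ((n:ℚ)+2-(k:ℚ)) := by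
      rw [eq_div_iff hne2]; linear_combination -e2
    have hb' : (((n+2).choose (k+1) : ℕ) : ℚ)
        = ((n:ℚ)+2-(k:ℚ)) * (((n+2).choose k : ℕ) : ℚ) / ((k:ℚ)+1) := by
      rw [eq_div_iff hk1]; linear_combination e3
    have hE : ((n:ℚ)+1-k)^3*((n:ℚ)+2-k)^3*((k:ℚ)+1)^4 ≠ 0 := by
      exact mul_ne_zero (mul_ne_zero (pow_ne_zero _ hne1) (pow_ne_zero _ hne2)) (pow_ne_zero _ hk1)
    have hA : ((n:ℚ)+1) * Fq n k + (2*(n:ℚ)+3) * Fq (n+1) k + ((n:ℚ)+2) * Fq (n+2) k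
        = (n.choose k : ℚ)^3 *
          (((k:ℚ)+1)^4*(((n:ℚ)+1)*(1+3*((n:ℚ)-2*k)*harmonicQ k)*((n:ℚ)+1-k)^3*((n:ℚ)+2-k)^3
            + (2*(n:ℚ)+3)*((n:ℚ)+1)^3*(1+3*((n:ℚ)+1-2*k)*harmonicQ k)*((n:ℚ)+2-k)^3
            + ((n:ℚ)+2)^4*((n:ℚ)+1)^3*(1+3*((n:ℚ)+2-2*k)*harmonicQ k)))
          / (((n:ℚ)+1-k)^3*((n:ℚ)+2-k)^3*((k:ℚ)+1)^4) := by
      simp only [Fq, hb, ha]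
      push_cast
      field_simp
    have hB : Gq n (k+1)
        = (n.choose k : ℚ)^3 *
          (((n:ℚ)+2-k)^3*(((k:ℚ)+1)*(Vc n ((k:ℚ)+1) + Uc n ((k:ℚ)+1)*harmonicQ k) + Uc n ((k:ℚ)+1)))
          / (((n:ℚ)+1-k)^3*((n:ℚ)+2-k)^3*((k:ℚ)+1)^4) := by
      rw [Gq, harmonicQ_succ k]
      simp only [hb', hb, ha]
      push_cast
      field_simp
      ring
    have hC : Gq n k
        = (n.choose k : ℚ)^3 * (((k:ℚ)+1)^4*(Vc n k + Uc n k*harmonicQ k))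
          / (((n:ℚ)+1-k)^3*((n:ℚ)+2-k)^3*((k:ℚ)+1)^4) := by
      rw [Gq]
      simp only [hb, ha]
      push_cast
      field_simp
    rw [hA, hB, hC, div_sub_div_same]
    congr 1
    linear_combination ((n.choose k : ℚ))^3 * polyId (n:ℚ) (k:ℚ) (harmonicQ k)

lemma Fq_zero {n k : ℕ} (h : n < k) : Fq n k = 0 := by
  simp [Fq, Nat.choose_eq_zero_of_lt h]

/-- The sum. -/
def Sq (n : ℕ) : ℚ := ∑ k ∈ range (n + 1), Fq n k

lemma Sq_ext (n K : ℕ) (h : n + 1 ≤ K) : ∑ k ∈ range K, Fq n k = Sq n := by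
  rw [Sq]
  refine (Finset.sum_subset (Finset.range_subset_range.2 h) ?_).symm
  intro x _ hx
  exact Fq_zero (by simp at hx; omega)

lemma Gq_zero_top (n : ℕ) : Gq n (n+3) = 0 := by
  simp [Gq, Nat.choose_eq_zero_of_lt (by omega : n + 2 < n + 3)]

lemma Gq_zero_bot (n : ℕ) : Gq n 0 = 0 := by
  have h0 : harmonicQ 0 = 0 := by simp [harmonicQ]
  have hV : Vc (n:ℚ) 0 = 0 := by norm_num [Vc]
  simp [Gq, h0]
  norm_num [Vc]

/-- The recurrence. -/
lemma Sq_rec (n : ℕ) :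
    ((n:ℚ)+1) * Sq n + (2*(n:ℚ)+3) * Sq (n+1) + ((n:ℚ)+2) * Sq (n+2) = 0 := by
  have h0 : Sq n = ∑ k ∈ range (n+3), Fq n k := (Sq_ext n (n+3) (by omega)).symm
  have h1 : Sq (n+1) = ∑ k ∈ range (n+3), Fq (n+1) k := (Sq_ext (n+1) (n+3) (by omega)).symm
  have h2 : Sq (n+2) = ∑ k ∈ range (n+3), Fq (n+2) k := by rw [Sq]
  rw [h0, h1, h2, Finset.mul_sum, Finset.mul_sum, Finset.mul_sum,
    ← Finset.sum_add_distrib, ← Finset.sum_add_distrib]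
  have : ∀ k ∈ range (n+3),
      ((n:ℚ)+1) * Fq n k + (2*(n:ℚ)+3) * Fq (n+1) k + ((n:ℚ)+2) * Fq (n+2) k
        = Gq n (k+1) - Gq n k := by
    intro k hkmem
    exact key n k (by simp at hkmem; omega)
  rw [Finset.sum_congr rfl this, Finset.sum_range_sub (Gq n) (n+3),
    Gq_zero_top, Gq_zero_bot, sub_zero]

lemma Sq_eq (n : ℕ) : Sq n = (-1 : ℚ) ^ n := by
  induction n using Nat.twoStepInduction with
  | zero =>
    simp [Sq, Fq, harmonicQ]
  | one =>
    rw [Sq]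
    rw [Finset.sum_range_succ, Finset.sum_range_one]
    simp [Fq, harmonicQ, Finset.sum_range_succ]
    norm_num
  | more n ih1 ih2 =>
    have hrec := Sq_rec n
    rw [ih1, ih2] at hrec
    have hn2 : ((n:ℚ)+2) ≠ 0 := by positivity
    have : ((n:ℚ)+2) * Sq (n+2) = ((n:ℚ)+2) * (-1:ℚ)^(n+2) := by
      rw [pow_succ, pow_succ]
      rw [pow_succ] at hrec
      linear_combination hrec
    exact mul_left_cancel₀ hn2 this

end AuxWZ

theorem stmt12 (n : ℕ) :
    ∑ k ∈ range (n + 1), (n.choose k : ℚ) ^ 3 * (1 + 3 * ((n : ℚ) - 2 * k) * harmonicQ k) = (-1) ^ n := by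
  have h := Sq_eq n
  rw [Sq] at h
  simpa [Fq] using h
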